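/- Let A, B ∈ ℝ^{n×n} be positive semidefinite, let t ∈ [0,1], and fix any matrix G with G·Gᵀ = A. A positive semidefinite matrix C minimizes the functional C ↦ (1−t)·W₂²(A, C) + t·W₂²(B, C) over all positive semidefinite matrices if and only if there exists a matrix M with M·Mᵀ = B and Gᵀ·M positive semidefinite such that C = G_t·G_tᵀ, where G_t := (1−t)·G + t·M. In particular, the set of minimizers is nonempty and does not depend on the choice of G. -/

import Mathlib

open Matrix

/-- The positive semidefinite square root of a psd matrix (junk value `0` otherwise). -/
noncomputable def psdSqrt {n : ℕ} (M : Matrix (Fin n) (Fin n) ℝ) : Matrix (Fin n) (Fin n) ℝ :=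
  letI := Classical.propDecidable M.PosSemidef
  if h : M.PosSemidef then h.1.eigenvectorUnitary.1 * diagonal ((↑) ∘ (√·) ∘ h.1.eigenvalues) *
    (star h.1.eigenvectorUnitary : Matrix (Fin n) (Fin n) ℝ) else 0

/-- `trace √(√A·B·√A)`. -/
noncomputable def sqrtTr {n : ℕ} (A B : Matrix (Fin n) (Fin n) ℝ) : ℝ :=
  (psdSqrt (psdSqrt A * B * psdSqrt A)).trace

/-- `T` is an optimal transport matrix from `A` to `B`. -/
def IsOT {n : ℕ} (A B T : Matrix (Fin n) (Fin n) ℝ) : Prop :=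
  T * A * Tᵀ = B ∧ (A * T).trace = sqrtTr A B

/-- Squared Bures–Wasserstein distance. -/
noncomputable def W2sq {n : ℕ} (A B : Matrix (Fin n) (Fin n) ℝ) : ℝ :=
  A.trace + B.trace - 2 * sqrtTr A B

section Aux
open Polynomial Filter
variable {n : ℕ}

open scoped MatrixOrder in
lemma psdSqrt_eq_sqrt {P : Matrix (Fin n) (Fin n) ℝ} (hP : P.PosSemidef) :
    psdSqrt P = CFC.sqrt P := by
  rw [psdSqrt, dif_pos hP, CFC.sqrt_eq_cfc, cfc_nnreal_eq_real _ P hP.nonneg, hP.1.cfc_eq,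
    IsHermitian.cfc, Unitary.conjStarAlgAut_apply]
  simp [Function.comp_def, max_eq_left (hP.eigenvalues_nonneg _)]

open scoped MatrixOrder in
lemma psdSqrt_unique {P S : Matrix (Fin n) (Fin n) ℝ} (hS : S.PosSemidef) (h : S * S = P) :
    psdSqrt P = S := by
  have hP : P.PosSemidef := by rw [← h, ← pow_two]; exact hS.pow 2
  rw [psdSqrt_eq_sqrt hP]
  exact CFC.sqrt_unique h hS.nonneg

open scoped MatrixOrder in
lemma psdSqrt_posSemidef {P : Matrix (Fin n) (Fin n) ℝ} (hP : P.PosSemidef) :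
    (psdSqrt P).PosSemidef := by rw [psdSqrt_eq_sqrt hP]; exact (CFC.sqrt_nonneg P).posSemidef

open scoped MatrixOrder in
lemma psdSqrt_mul_self {P : Matrix (Fin n) (Fin n) ℝ} (hP : P.PosSemidef) :
    psdSqrt P * psdSqrt P = P := by rw [psdSqrt_eq_sqrt hP]; exact CFC.sqrt_mul_sqrt_self P hP.nonneg

lemma psd_transpose_eq {S : Matrix (Fin n) (Fin n) ℝ} (hS : S.PosSemidef) : Sᵀ = S := by
  have := hS.1
  rwa [IsHermitian, conjTranspose_eq_transpose_of_trivial] at this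

lemma finite_bad (M : Matrix (Fin n) (Fin n) ℝ) : {ε : ℝ | det (M + ε • 1) = 0}.Finite := by
  have hsub : {ε : ℝ | det (M + ε • 1) = 0} ⊆ {x : ℝ | ((-M).charpoly).IsRoot x} := by
    intro ε hε
    have hmap : (charmatrix (-M)).map (Polynomial.evalRingHom ε) = M + ε • 1 := by
      ext i j
      by_cases h : i = j
      · subst h
        simp [charmatrix_apply, Matrix.map_apply, Matrix.one_apply, Matrix.diagonal_apply, add_comm]
      · simp [charmatrix_apply, Matrix.map_apply, Matrix.one_apply, h, Matrix.diagonal_apply]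
    have : ((-M).charpoly).eval ε = det (M + ε • 1) := by
      rw [Matrix.charpoly, ← hmap]
      exact RingHom.map_det (Polynomial.evalRingHom ε) (charmatrix (-M))
    simpa [Polynomial.IsRoot, this] using hε
  exact ((Polynomial.finite_setOf_isRoot ((-M).charpoly_monic.ne_zero))).subset hsub

lemma polar_invertible (N : Matrix (Fin n) (Fin n) ℝ) (hdet : N.det ≠ 0) :
    ∃ O : Matrix (Fin n) (Fin n) ℝ, O * Oᵀ = 1 ∧ (N * Oᵀ).PosSemidef := by
  have hNNT : (N * Nᵀ).PosSemidef := by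
    have := posSemidef_self_mul_conjTranspose N
    rwa [conjTranspose_eq_transpose_of_trivial] at this
  set S := psdSqrt (N * Nᵀ) with hSdef
  have hSpsd : S.PosSemidef := psdSqrt_posSemidef hNNT
  have hSS : S * S = N * Nᵀ := psdSqrt_mul_self hNNT
  have hST : Sᵀ = S := psd_transpose_eq hSpsd
  have hSdet : S.det ≠ 0 := by
    intro h
    have : (S * S).det = 0 := by rw [det_mul, h, mul_zero]
    rw [hSS, det_mul, det_transpose] at this
    exact hdet (by nlinarith)
  have hSu : IsUnit S.det := isUnit_iff_ne_zero.mpr hSdet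
  refine ⟨S⁻¹ * N, ?_, ?_⟩
  · have : (S⁻¹ * N) * (S⁻¹ * N)ᵀ = S⁻¹ * (N * Nᵀ) * (S⁻¹)ᵀ := by
      simp only [transpose_mul, Matrix.mul_assoc]
    rw [this, ← hSS, transpose_nonsing_inv, hST]
    calc S⁻¹ * (S * S) * S⁻¹ = (S⁻¹ * S) * (S * S⁻¹) := by simp only [Matrix.mul_assoc]
      _ = 1 := by rw [Matrix.nonsing_inv_mul S hSu, Matrix.mul_nonsing_inv S hSu, Matrix.mul_one]
  · have : N * (S⁻¹ * N)ᵀ = (N * Nᵀ) * (S⁻¹)ᵀ := by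
      simp only [transpose_mul, Matrix.mul_assoc]
    rw [this, ← hSS, transpose_nonsing_inv, hST]
    have heq : S * S * S⁻¹ = S := by
      rw [Matrix.mul_assoc, Matrix.mul_nonsing_inv S hSu, Matrix.mul_one]
    rw [heq]
    exact hSpsd

lemma orth_row_sum' {W : Matrix (Fin n) (Fin n) ℝ} (hW : W * Wᵀ = 1) (i : Fin n) :
    ∑ j, (W i j)^2 = 1 := by
  have h := congrFun (congrFun hW i) i
  simp [Matrix.mul_apply, Matrix.one_apply, pow_two] at h ⊢
  convert h using 2

lemma isCompact_orth : IsCompact {O : Matrix (Fin n) (Fin n) ℝ | O * Oᵀ = 1} := by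
  have hB : IsCompact (Set.univ.pi fun _ : Fin n => Set.univ.pi
      fun _ : Fin n => Set.Icc (-1 : ℝ) 1) :=
    isCompact_univ_pi fun _ => isCompact_univ_pi fun _ => isCompact_Icc
  apply IsCompact.of_isClosed_subset hB
  · have hc : Continuous fun O : Matrix (Fin n) (Fin n) ℝ => O * Oᵀ :=
      (continuous_id.matrix_mul continuous_id.matrix_transpose)
    exact isClosed_eq hc continuous_const
  · intro O hO i _ j _
    have hs := orth_row_sum' hO i
    have h1 : (O i j)^2 ≤ 1 := by
      rw [← hs]
      exact Finset.single_le_sum (f := fun j => (O i j)^2) (fun j _ => sq_nonneg _)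
        (Finset.mem_univ j)
    constructor <;> nlinarith

lemma posSemidef_of_tendsto {f : ℕ → Matrix (Fin n) (Fin n) ℝ} {L : Matrix (Fin n) (Fin n) ℝ}
    (h : ∀ k, (f k).PosSemidef) (ht : Tendsto f atTop (nhds L)) : L.PosSemidef := by
  have hentry : ∀ i j, Tendsto (fun k => f k i j) atTop (nhds (L i j)) := by
    intro i j
    exact (((continuous_apply j).comp (continuous_apply i)).tendsto L).comp ht
  refine PosSemidef.of_dotProduct_mulVec_nonneg ?_ ?_
  · have hsym : ∀ i j, L j i = L i j := by
      intro i j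
      have heqk : ∀ k, f k i j = f k j i := by
        intro k
        have := congrFun (congrFun (h k).1 j) i
        simpa [Matrix.conjTranspose_apply] using this
      have h2 : Tendsto (fun k => f k j i) atTop (nhds (L i j)) := by
        have heq : (fun k => f k j i) = fun k => f k i j := funext fun k => (heqk k).symm
        rw [heq]; exact hentry i j
      exact tendsto_nhds_unique (hentry j i) h2
    ext i j
    simp [Matrix.conjTranspose_apply, hsym i j]
  · intro x
    have hφc : Continuous fun M : Matrix (Fin n) (Fin n) ℝ =>
        ∑ i, x i * ∑ j, M i j * x j := by
      refine continuous_finset_sum _ fun i _ => Continuous.mul continuous_const ?_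
      exact continuous_finset_sum _ fun j _ =>
        ((continuous_id.matrix_elem i j).mul continuous_const)
    have hφt : Tendsto (fun k => ∑ i, x i * ∑ j, f k i j * x j) atTop
        (nhds (∑ i, x i * ∑ j, L i j * x j)) := (hφc.tendsto L).comp ht
    have hge : ∀ k, 0 ≤ ∑ i, x i * ∑ j, f k i j * x j := by
      intro k
      have := (h k).dotProduct_mulVec_nonneg x
      simpa [dotProduct, Matrix.mulVec, dotProduct] using this
    have := ge_of_tendsto' hφt hge
    simpa [dotProduct, Matrix.mulVec] using this

instance : FirstCountableTopology (Matrix (Fin n) (Fin n) ℝ) :=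
  inferInstanceAs (FirstCountableTopology (Fin n → Fin n → ℝ))

lemma exists_polar (M : Matrix (Fin n) (Fin n) ℝ) :
    ∃ O : Matrix (Fin n) (Fin n) ℝ, O * Oᵀ = 1 ∧ (M * Oᵀ).PosSemidef := by
  have hch : ∀ k : ℕ, ∃ e : ℝ, e ∈ Set.Ioo (0:ℝ) (1/((k:ℝ)+1)) ∧ (M + e • 1).det ≠ 0 := by
    intro k
    have hioo : (Set.Ioo (0:ℝ) (1/((k:ℝ)+1))).Infinite :=
      Set.Ioo_infinite (by positivity)
    obtain ⟨e, he⟩ := (hioo.diff (finite_bad M)).nonempty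
    exact ⟨e, he.1, he.2⟩
  choose ε hε1 hε2 using hch
  have hεt : Tendsto ε atTop (nhds 0) := by
    refine tendsto_of_tendsto_of_tendsto_of_le_of_le tendsto_const_nhds
      tendsto_one_div_add_atTop_nhds_zero_nat (fun k => (hε1 k).1.le) (fun k => (hε1 k).2.le)
  have hOk : ∀ k, ∃ O : Matrix (Fin n) (Fin n) ℝ,
      O * Oᵀ = 1 ∧ ((M + ε k • 1) * Oᵀ).PosSemidef :=
    fun k => polar_invertible _ (hε2 k)
  choose Os hOs1 hOs2 using hOk
  obtain ⟨O, hOK, φ, hφ, hOt⟩ := isCompact_orth.tendsto_subseq (x := Os) (fun k => hOs1 k)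
  have hNt : Tendsto (fun k => M + ε (φ k) • (1 : Matrix (Fin n) (Fin n) ℝ)) atTop (nhds M) := by
    have hεφ : Tendsto (fun k => ε (φ k)) atTop (nhds 0) := hεt.comp hφ.tendsto_atTop
    have : Tendsto (fun k => M + ε (φ k) • (1 : Matrix (Fin n) (Fin n) ℝ)) atTop
        (nhds (M + (0:ℝ) • 1)) :=
      tendsto_const_nhds.add (hεφ.smul tendsto_const_nhds)
    simpa using this
  have hTt : Tendsto (fun k => (Os (φ k))ᵀ) atTop (nhds Oᵀ) :=
    ((continuous_id.matrix_transpose).tendsto O).comp hOt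
  have hmul : Tendsto (fun k => (M + ε (φ k) • 1) * (Os (φ k))ᵀ) atTop (nhds (M * Oᵀ)) :=
    hNt.mul hTt
  refine ⟨O, hOK, posSemidef_of_tendsto (fun k => hOs2 (φ k)) hmul⟩

lemma psd_mul_transpose (M : Matrix (Fin n) (Fin n) ℝ) : (M * Mᵀ).PosSemidef := by
  have := posSemidef_self_mul_conjTranspose M
  rwa [conjTranspose_eq_transpose_of_trivial] at this

lemma psd_transpose_mul (M : Matrix (Fin n) (Fin n) ℝ) : (Mᵀ * M).PosSemidef := by
  have := posSemidef_conjTranspose_mul_self M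
  rwa [conjTranspose_eq_transpose_of_trivial] at this

/-- Packaged polar decomposition. -/
lemma exists_polar' (M : Matrix (Fin n) (Fin n) ℝ) :
    ∃ S O : Matrix (Fin n) (Fin n) ℝ, S.PosSemidef ∧ S * S = M * Mᵀ ∧ O * Oᵀ = 1 ∧ M = S * O := by
  obtain ⟨O, hO, hpsd⟩ := exists_polar M
  have hO2 : Oᵀ * O = 1 := mul_eq_one_comm.mp hO
  refine ⟨M * Oᵀ, O, hpsd, ?_, hO, ?_⟩
  · have hT : (M * Oᵀ)ᵀ = M * Oᵀ := psd_transpose_eq hpsd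
    calc (M * Oᵀ) * (M * Oᵀ) = (M * Oᵀ) * (M * Oᵀ)ᵀ := by rw [hT]
      _ = M * (Oᵀ * O) * Mᵀ := by simp only [transpose_mul, transpose_transpose, Matrix.mul_assoc]
      _ = M * Mᵀ := by rw [hO2, Matrix.mul_one]
  · rw [Matrix.mul_assoc, hO2, Matrix.mul_one]

/-- `tr √(MMᵀ) = tr √(MᵀM)`. -/
lemma trace_psdSqrt_comm (M : Matrix (Fin n) (Fin n) ℝ) :
    (psdSqrt (M * Mᵀ)).trace = (psdSqrt (Mᵀ * M)).trace := by
  obtain ⟨S, O, hS, hSS, hO, hMSO⟩ := exists_polar' M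
  have hST : Sᵀ = S := psd_transpose_eq hS
  have h1 : psdSqrt (M * Mᵀ) = S := psdSqrt_unique hS hSS
  have hTpsd : (Oᵀ * S * O).PosSemidef := by
    have := hS.mul_mul_conjTranspose_same Oᵀ
    rwa [conjTranspose_eq_transpose_of_trivial, transpose_transpose] at this
  have h2 : psdSqrt (Mᵀ * M) = Oᵀ * S * O := by
    apply psdSqrt_unique hTpsd
    calc (Oᵀ * S * O) * (Oᵀ * S * O)
        = Oᵀ * S * (O * Oᵀ) * S * O := by simp only [Matrix.mul_assoc]
      _ = Oᵀ * (S * S) * O := by rw [hO]; simp only [Matrix.mul_one, Matrix.mul_assoc]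
      _ = Mᵀ * M := by
          rw [hMSO]; simp only [transpose_mul, hST, Matrix.mul_assoc]
  rw [h1, h2, Matrix.mul_assoc, Matrix.trace_mul_comm (Oᵀ) (S * O), Matrix.mul_assoc, hO,
    Matrix.mul_one]

lemma trace_psd_mul_orth {S O : Matrix (Fin n) (Fin n) ℝ} (hS : S.PosSemidef) (hO : O * Oᵀ = 1) :
    (S * O).trace ≤ S.trace ∧ ((S * O).trace = S.trace → S * O = S) := by
  classical
  set U : Matrix (Fin n) (Fin n) ℝ := (hS.1.eigenvectorUnitary : Matrix (Fin n) (Fin n) ℝ) with hUdef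
  set d : Fin n → ℝ := hS.1.eigenvalues with hddef
  have spec : S = U * diagonal d * Uᵀ := by
    have h := hS.1.spectral_theorem
    simpa [Unitary.conjStarAlgAut_apply, Matrix.star_eq_conjTranspose, conjTranspose_eq_transpose_of_trivial, Function.comp] using h
  have hU1 : U * Uᵀ = 1 := by
    have := (Matrix.mem_unitaryGroup_iff).mp hS.1.eigenvectorUnitary.2
    rwa [Matrix.star_eq_conjTranspose, conjTranspose_eq_transpose_of_trivial] at this
  have hU2 : Uᵀ * U = 1 := mul_eq_one_comm.mp hU1
  have hO2 : Oᵀ * O = 1 := mul_eq_one_comm.mp hO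
  set W : Matrix (Fin n) (Fin n) ℝ := Uᵀ * O * U with hWdef
  have hW : W * Wᵀ = 1 := by
    rw [hWdef]
    simp only [transpose_mul, transpose_transpose]
    calc Uᵀ * O * U * (Uᵀ * (Oᵀ * U)) = Uᵀ * O * (U * Uᵀ) * (Oᵀ * U) := by
          simp only [Matrix.mul_assoc]
      _ = Uᵀ * (O * Oᵀ) * U := by rw [hU1]; simp only [Matrix.mul_assoc, Matrix.one_mul]
      _ = 1 := by rw [hO, Matrix.mul_one, hU2]
  have hdiag : ∀ (M : Matrix (Fin n) (Fin n) ℝ), (diagonal d * M).trace = ∑ i, d i * M i i := by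
    intro M
    simp [Matrix.trace, Matrix.diag, Matrix.mul_apply, Matrix.diagonal_apply, ite_mul]
  have htr : (S * O).trace = ∑ i, d i * W i i := by
    rw [spec]
    have : U * diagonal d * Uᵀ * O = U * (diagonal d * W) * Uᵀ := by
      rw [hWdef]
      calc U * diagonal d * Uᵀ * O = U * diagonal d * Uᵀ * O * 1 := by rw [Matrix.mul_one]
        _ = U * (diagonal d * (Uᵀ * O * U)) * Uᵀ := by
            rw [← hU1]; simp only [Matrix.mul_assoc]
    rw [this, Matrix.trace_mul_comm (U * (diagonal d * W)) Uᵀ, ← Matrix.mul_assoc,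
      ← Matrix.mul_assoc, hU2, Matrix.one_mul, hdiag]
  have htrS : S.trace = ∑ i, d i := by
    rw [spec, Matrix.trace_mul_comm (U * diagonal d) Uᵀ, ← Matrix.mul_assoc, hU2,
      Matrix.one_mul, Matrix.trace_diagonal]
  have hd0 : ∀ i, 0 ≤ d i := fun i => hS.eigenvalues_nonneg i
  have hWle : ∀ i, W i i ≤ 1 := by
    intro i
    have h1 : (W i i)^2 ≤ 1 := by
      rw [← orth_row_sum' hW i]
      exact Finset.single_le_sum (f := fun j => (W i j)^2) (fun j _ => sq_nonneg _) (Finset.mem_univ i)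
    nlinarith
  have hterm : ∀ i ∈ Finset.univ, d i * W i i ≤ d i := by
    intro i _
    nlinarith [hd0 i, hWle i]
  constructor
  · rw [htr, htrS]
    exact Finset.sum_le_sum hterm
  · intro hEq
    rw [htr, htrS] at hEq
    have hall := (Finset.sum_eq_sum_iff_of_le hterm).mp hEq
    have hDW : diagonal d * W = diagonal d := by
      ext i j
      have hij : (diagonal d * W) i j = d i * W i j := by
        simp [Matrix.mul_apply, Matrix.diagonal_apply, ite_mul]
      rw [hij, Matrix.diagonal_apply]
      by_cases hd : d i = 0
      · simp [hd]
      · have hWii : W i i = 1 := by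
          have h := hall i (Finset.mem_univ i)
          have h2 : d i * W i i = d i * 1 := by rw [h, mul_one]
          exact mul_left_cancel₀ hd h2
        by_cases hj : i = j
        · subst hj
          rw [hWii, if_pos rfl, mul_one]
        · simp only [if_neg hj]
          have hrow := orth_row_sum' hW i
          have hsplit := Finset.add_sum_erase Finset.univ (fun k => (W i k)^2) (Finset.mem_univ i)
          beta_reduce at hsplit
          have hsum0 : ∑ k ∈ Finset.univ.erase i, (W i k)^2 = 0 := by
            have h1 : (W i i)^2 = 1 := by rw [hWii]; norm_num
            linarith
          have hz : (W i j)^2 = 0 := by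
            have hmem : j ∈ Finset.univ.erase i := Finset.mem_erase.mpr ⟨fun h => hj h.symm, Finset.mem_univ j⟩
            exact Finset.sum_eq_zero_iff_of_nonneg (fun k _ => sq_nonneg (W i k)) |>.mp hsum0 j hmem
          have hzz : W i j = 0 := by nlinarith [hz]
          simp [hzz]
    have : S * O = U * (diagonal d * W) * Uᵀ := by
      rw [hWdef, spec]
      calc U * diagonal d * Uᵀ * O = U * diagonal d * Uᵀ * O * 1 := by rw [Matrix.mul_one]
        _ = U * (diagonal d * (Uᵀ * O * U)) * Uᵀ := by
            rw [← hU1]; simp only [Matrix.mul_assoc]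
    rw [this, hDW, ← spec]

/-- Representation of `sqrtTr` via arbitrary square-root factorizations. -/
lemma sqrtTr_rep {P Q X Y : Matrix (Fin n) (Fin n) ℝ} (hX : X * Xᵀ = P) (hY : Y * Yᵀ = Q) :
    sqrtTr P Q = (psdSqrt ((Xᵀ * Y) * (Xᵀ * Y)ᵀ)).trace := by
  have hP : P.PosSemidef := hX ▸ psd_mul_transpose X
  set R := psdSqrt P with hRdef
  have hR : R.PosSemidef := psdSqrt_posSemidef hP
  have hRR : R * R = P := psdSqrt_mul_self hP
  have hRT : Rᵀ = R := psd_transpose_eq hR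
  have step1 : R * Q * R = (R * Y) * (R * Y)ᵀ := by
    rw [← hY]
    simp only [transpose_mul, hRT, Matrix.mul_assoc]
  have step2 : (R * Y)ᵀ * (R * Y) = (Xᵀ * Y)ᵀ * (Xᵀ * Y) := by
    calc (R * Y)ᵀ * (R * Y) = Yᵀ * (R * R) * Y := by
          simp only [transpose_mul, hRT, Matrix.mul_assoc]
      _ = Yᵀ * (X * Xᵀ) * Y := by rw [hRR, hX]
      _ = (Xᵀ * Y)ᵀ * (Xᵀ * Y) := by
          simp only [transpose_mul, transpose_transpose, Matrix.mul_assoc]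
  calc sqrtTr P Q = (psdSqrt (R * Q * R)).trace := rfl
    _ = (psdSqrt ((R * Y) * (R * Y)ᵀ)).trace := by rw [step1]
    _ = (psdSqrt ((R * Y)ᵀ * (R * Y))).trace := trace_psdSqrt_comm _
    _ = (psdSqrt ((Xᵀ * Y)ᵀ * (Xᵀ * Y))).trace := by rw [step2]
    _ = (psdSqrt ((Xᵀ * Y) * (Xᵀ * Y)ᵀ)).trace := (trace_psdSqrt_comm _).symm

lemma trace_le_sqrtTr {P Q X Y : Matrix (Fin n) (Fin n) ℝ} (hX : X * Xᵀ = P) (hY : Y * Yᵀ = Q) :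
    (Xᵀ * Y).trace ≤ sqrtTr P Q ∧
      ((Xᵀ * Y).trace = sqrtTr P Q → (Xᵀ * Y).PosSemidef) := by
  set Z := Xᵀ * Y with hZdef
  obtain ⟨S, O, hS, hSS, hO, hZSO⟩ := exists_polar' Z
  have hrep : sqrtTr P Q = S.trace := by
    rw [sqrtTr_rep hX hY, ← hZdef, psdSqrt_unique hS hSS]
  have hb := trace_psd_mul_orth hS hO
  constructor
  · rw [hrep, hZSO]; exact hb.1
  · intro h
    rw [hrep, hZSO] at h
    rw [hZSO, hb.2 h]
    exact hS

lemma sqrtTr_of_psd {P Q X Y : Matrix (Fin n) (Fin n) ℝ} (hX : X * Xᵀ = P) (hY : Y * Yᵀ = Q)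
    (hpsd : (Xᵀ * Y).PosSemidef) : (Xᵀ * Y).trace = sqrtTr P Q := by
  have hT : (Xᵀ * Y)ᵀ = Xᵀ * Y := psd_transpose_eq hpsd
  rw [sqrtTr_rep hX hY, hT, psdSqrt_unique hpsd rfl]

lemma exists_factor (X : Matrix (Fin n) (Fin n) ℝ) {Q : Matrix (Fin n) (Fin n) ℝ}
    (hQ : Q.PosSemidef) : ∃ Y, Y * Yᵀ = Q ∧ (Xᵀ * Y).PosSemidef := by
  set R := psdSqrt Q with hRdef
  have hR : R.PosSemidef := psdSqrt_posSemidef hQ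
  have hRR : R * R = Q := psdSqrt_mul_self hQ
  have hRT : Rᵀ = R := psd_transpose_eq hR
  obtain ⟨O, hO, hpsd⟩ := exists_polar (Xᵀ * R)
  have hO2 : Oᵀ * O = 1 := mul_eq_one_comm.mp hO
  refine ⟨R * Oᵀ, ?_, ?_⟩
  · calc (R * Oᵀ) * (R * Oᵀ)ᵀ
        = R * (Oᵀ * O) * Rᵀ := by
          simp only [transpose_mul, transpose_transpose, Matrix.mul_assoc]
      _ = Q := by rw [hO2, hRT, Matrix.mul_one, hRR]
  · have : Xᵀ * (R * Oᵀ) = (Xᵀ * R) * Oᵀ := by rw [Matrix.mul_assoc]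
    rw [this]
    exact hpsd

lemma psd_smul {c : ℝ} (hc : 0 ≤ c) {M : Matrix (Fin n) (Fin n) ℝ} (hM : M.PosSemidef) :
    (c • M).PosSemidef := by
  refine PosSemidef.of_dotProduct_mulVec_nonneg ?_ ?_
  · have h1 := hM.1
    rw [IsHermitian] at h1 ⊢
    rw [conjTranspose_smul, h1]
    simp
  · intro x
    have := hM.dotProduct_mulVec_nonneg x
    simp only [Matrix.smul_mulVec, dotProduct_smul] at *
    exact smul_nonneg hc this

lemma trace_transpose_mul_self_nonneg (X : Matrix (Fin n) (Fin n) ℝ) : 0 ≤ (Xᵀ * X).trace := by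
  have h : (Xᵀ * X).trace = ∑ j, ∑ i, (X i j)^2 := by
    simp [Matrix.trace, Matrix.diag, Matrix.mul_apply, Matrix.transpose_apply, pow_two]
  rw [h]
  exact Finset.sum_nonneg fun j _ => Finset.sum_nonneg fun i _ => sq_nonneg _

lemma eq_zero_of_trace_transpose_mul_self {X : Matrix (Fin n) (Fin n) ℝ}
    (h : (Xᵀ * X).trace = 0) : X = 0 := by
  have heq : (Xᵀ * X).trace = ∑ j, ∑ i, (X i j)^2 := by
    simp [Matrix.trace, Matrix.diag, Matrix.mul_apply, Matrix.transpose_apply, pow_two]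
  rw [heq] at h
  ext i j
  have h1 := (Finset.sum_eq_zero_iff_of_nonneg
    (fun j _ => Finset.sum_nonneg fun i _ => sq_nonneg (X i j))).mp h j (Finset.mem_univ j)
  have h2 := (Finset.sum_eq_zero_iff_of_nonneg
    (fun i _ => sq_nonneg (X i j))).mp h1 i (Finset.mem_univ i)
  simpa using pow_eq_zero_iff (n := 2) (by norm_num) |>.mp h2

end Aux

/-- Fix a Green's matrix `G` of `A` and `t ∈ [0,1]`. A psd matrix `C`
minimizes `C ↦ (1−t)·W₂²(A,C) + t·W₂²(B,C)` iff `C = G_t·G_tᵀ` with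
`G_t = (1−t)·G + t·M` for some `M` with `M·Mᵀ = B` and `Gᵀ·M ⪰ 0`. In particular the
set of minimizers is nonempty (and, by the equivalence, independent of the choice of `G`). -/
theorem stmt11 {n : ℕ} (A B : Matrix (Fin n) (Fin n) ℝ)
    (hA : A.PosSemidef) (hB : B.PosSemidef)
    (t : ℝ) (ht0 : 0 ≤ t) (ht1 : t ≤ 1)
    (G : Matrix (Fin n) (Fin n) ℝ) (hG : G * Gᵀ = A) :
    (∀ C : Matrix (Fin n) (Fin n) ℝ, C.PosSemidef →
        ((∀ D : Matrix (Fin n) (Fin n) ℝ, D.PosSemidef →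
            (1 - t) * W2sq A C + t * W2sq B C ≤ (1 - t) * W2sq A D + t * W2sq B D) ↔
          ∃ M : Matrix (Fin n) (Fin n) ℝ, M * Mᵀ = B ∧ (Gᵀ * M).PosSemidef ∧
            C = ((1 - t) • G + t • M) * ((1 - t) • G + t • M)ᵀ)) ∧
      ∃ C : Matrix (Fin n) (Fin n) ℝ, C.PosSemidef ∧
        ∀ D : Matrix (Fin n) (Fin n) ℝ, D.PosSemidef →
          (1 - t) * W2sq A C + t * W2sq B C ≤ (1 - t) * W2sq A D + t * W2sq B D := by
  have ht1' : (0:ℝ) ≤ 1 - t := by linarith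
  set s : ℝ := sqrtTr A B with hsdef
  set m : ℝ := (1-t)*A.trace + t*B.trace -
    ((1-t)^2*A.trace + t^2*B.trace + 2*t*(1-t)*s) with hmdef
  have hGG : (Gᵀ * G).PosSemidef := psd_transpose_mul G
  have hswap : ∀ P R : Matrix (Fin n) (Fin n) ℝ, (Pᵀ * R).trace = (Rᵀ * P).trace := by
    intro P R
    rw [← Matrix.trace_transpose (Pᵀ * R), Matrix.transpose_mul, Matrix.transpose_transpose]
  -- key expansion identity
  have key : ∀ D H M₁ : Matrix (Fin n) (Fin n) ℝ, H * Hᵀ = D → M₁ * M₁ᵀ = B →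
      (Gᵀ * H).PosSemidef → (Hᵀ * M₁).PosSemidef →
      (1 - t) * W2sq A D + t * W2sq B D - m =
        ((H - ((1-t) • G + t • M₁))ᵀ * (H - ((1-t) • G + t • M₁))).trace
          + 2*t*(1-t)*(s - (Gᵀ*M₁).trace) := by
    intro D H M₁ hH hM₁ hGH hHM
    set K : Matrix (Fin n) (Fin n) ℝ := (1-t) • G + t • M₁ with hK
    have hAD : sqrtTr A D = (Gᵀ * H).trace := (sqrtTr_of_psd hG hH hGH).symm
    have hBD : sqrtTr B D = (M₁ᵀ * H).trace := by
      refine (sqrtTr_of_psd hM₁ hH ?_).symm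
      have := hHM.transpose
      rwa [Matrix.transpose_mul, Matrix.transpose_transpose] at this
    have hDtr : D.trace = (Hᵀ * H).trace := by rw [← hH, Matrix.trace_mul_comm]
    have e1 : ((H - K)ᵀ * (H - K)).trace =
        (Hᵀ*H).trace - 2*(Kᵀ*H).trace + (Kᵀ*K).trace := by
      have hx : (H - K)ᵀ * (H - K) = Hᵀ*H - Hᵀ*K - (Kᵀ*H - Kᵀ*K) := by
        simp only [Matrix.transpose_sub, Matrix.sub_mul, Matrix.mul_sub]
        abel
      rw [hx]
      simp only [Matrix.trace_sub]
      have := hswap H K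
      linarith
    have e2 : (Kᵀ*K).trace = (1-t)^2*A.trace + 2*t*(1-t)*(Gᵀ*M₁).trace + t^2*B.trace := by
      have hx : Kᵀ*K = ((1-t)*(1-t)) • (Gᵀ*G) + ((1-t)*t) • (Gᵀ*M₁)
          + ((t*(1-t)) • (M₁ᵀ*G) + (t*t) • (M₁ᵀ*M₁)) := by
        rw [hK]
        simp only [Matrix.transpose_add, Matrix.transpose_smul, Matrix.add_mul, Matrix.mul_add,
          Matrix.smul_mul, Matrix.mul_smul, smul_smul, smul_add]
        module
      rw [hx]
      simp only [Matrix.trace_add, Matrix.trace_smul, smul_eq_mul]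
      have h1 : (Gᵀ*G).trace = A.trace := by rw [Matrix.trace_mul_comm, hG]
      have h2 : (M₁ᵀ*M₁).trace = B.trace := by rw [Matrix.trace_mul_comm, hM₁]
      have h3 : (M₁ᵀ*G).trace = (Gᵀ*M₁).trace := hswap M₁ G
      rw [h1, h2, h3]; ring
    have e3 : (Kᵀ*H).trace = (1-t)*(Gᵀ*H).trace + t*(M₁ᵀ*H).trace := by
      have hx : Kᵀ*H = (1-t) • (Gᵀ*H) + t • (M₁ᵀ*H) := by
        rw [hK]
        simp only [Matrix.transpose_add, Matrix.transpose_smul, Matrix.add_mul, Matrix.smul_mul]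
      rw [hx]
      simp only [Matrix.trace_add, Matrix.trace_smul, smul_eq_mul]
    simp only [W2sq]
    rw [hAD, hBD, hDtr, e1, e2, e3, hmdef]
    ring
  obtain ⟨M₀, hM₀B, hM₀psd⟩ := exists_factor G hB
  have hM₀tr : (Gᵀ * M₀).trace = s := by
    rw [hsdef]; exact sqrtTr_of_psd hG hM₀B hM₀psd
  -- lower bound
  have lower : ∀ D : Matrix (Fin n) (Fin n) ℝ, D.PosSemidef →
      m ≤ (1-t)*W2sq A D + t*W2sq B D := by
    intro D hD
    obtain ⟨H, hH, hGH⟩ := exists_factor G hD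
    obtain ⟨M₁, hM₁, hHM⟩ := exists_factor H hB
    have hk := key D H M₁ hH hM₁ hGH hHM
    have h1 : 0 ≤ ((H - ((1-t) • G + t • M₁))ᵀ * (H - ((1-t) • G + t • M₁))).trace :=
      trace_transpose_mul_self_nonneg _
    have h2 : (Gᵀ*M₁).trace ≤ s := by
      rw [hsdef]; exact (trace_le_sqrtTr hG hM₁).1
    have h3 : (0:ℝ) ≤ t*(1-t) := mul_nonneg ht0 ht1'
    nlinarith
  -- value at candidate minimizers
  have form_val : ∀ M : Matrix (Fin n) (Fin n) ℝ, M * Mᵀ = B → (Gᵀ * M).PosSemidef →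
      (1 - t) * W2sq A (((1 - t) • G + t • M) * ((1 - t) • G + t • M)ᵀ) +
        t * W2sq B (((1 - t) • G + t • M) * ((1 - t) • G + t • M)ᵀ) = m := by
    intro M hMB hMpsd
    have hGK : (Gᵀ*((1 - t) • G + t • M)).PosSemidef := by
      have hx : Gᵀ*((1 - t) • G + t • M) = (1-t) • (Gᵀ*G) + t • (Gᵀ*M) := by
        simp only [Matrix.mul_add, Matrix.mul_smul]
      rw [hx]
      exact (psd_smul ht1' hGG).add (psd_smul ht0 hMpsd)
    have hKM : (((1 - t) • G + t • M)ᵀ*M).PosSemidef := by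
      have hx : ((1 - t) • G + t • M)ᵀ*M = (1-t) • (Gᵀ*M) + t • (Mᵀ*M) := by
        simp only [Matrix.transpose_add, Matrix.transpose_smul, Matrix.add_mul, Matrix.smul_mul]
      rw [hx]
      exact (psd_smul ht1' hMpsd).add (psd_smul ht0 (psd_transpose_mul M))
    have hk := key (((1 - t) • G + t • M) * ((1 - t) • G + t • M)ᵀ)
      ((1 - t) • G + t • M) M rfl hMB hGK hKM
    have htr : (Gᵀ*M).trace = s := by
      rw [hsdef]; exact sqrtTr_of_psd hG hMB hMpsd
    rw [htr, sub_self, sub_self] at hk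
    simp only [Matrix.transpose_zero, Matrix.zero_mul, Matrix.trace_zero, mul_zero,
      add_zero, zero_add] at hk
    linarith
  constructor
  · intro C hC
    constructor
    · intro hmin
      have hfC : (1-t)*W2sq A C + t*W2sq B C = m := by
        have h0 := hmin (((1-t) • G + t • M₀) * ((1-t) • G + t • M₀)ᵀ) (psd_mul_transpose _)
        have h1 := form_val M₀ hM₀B hM₀psd
        have h2 := lower C hC
        linarith
      obtain ⟨H, hH, hGH⟩ := exists_factor G hC
      obtain ⟨M₁, hM₁, hHM⟩ := exists_factor H hB
      have hk := key C H M₁ hH hM₁ hGH hHM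
      have h1 : 0 ≤ ((H - ((1-t) • G + t • M₁))ᵀ * (H - ((1-t) • G + t • M₁))).trace :=
        trace_transpose_mul_self_nonneg _
      have h2 : (Gᵀ*M₁).trace ≤ s := by
        rw [hsdef]; exact (trace_le_sqrtTr hG hM₁).1
      have h3 : (0:ℝ) ≤ t*(1-t) := mul_nonneg ht0 ht1'
      have hE : (0:ℝ) ≤ 2*t*(1-t)*(s - (Gᵀ*M₁).trace) := by nlinarith
      have hT0 : ((H - ((1-t) • G + t • M₁))ᵀ * (H - ((1-t) • G + t • M₁))).trace = 0 := by
        linarith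
      have hE0 : 2*t*(1-t)*(s - (Gᵀ*M₁).trace) = 0 := by linarith
      have hHK : H = (1-t) • G + t • M₁ := by
        have := eq_zero_of_trace_transpose_mul_self hT0
        exact sub_eq_zero.mp this
      by_cases hcase : t * (1-t) = 0
      · rcases mul_eq_zero.mp hcase with h | h
        · refine ⟨M₀, hM₀B, hM₀psd, ?_⟩
          rw [← hH, hHK, h]
          simp
        · have ht' : t = 1 := by linarith
          refine ⟨M₀, hM₀B, hM₀psd, ?_⟩
          rw [← hH, hHK, ht']
          simp [hM₁, hM₀B]
      · have hx : s - (Gᵀ*M₁).trace = 0 := by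
          rcases mul_eq_zero.mp hE0 with h' | h'
          · exfalso
            apply hcase
            rcases mul_eq_zero.mp h' with h'' | h''
            · have h2t : t = 0 := by linarith
              rw [h2t]; ring
            · rw [h'']; ring
          · exact h'
        have htreq : (Gᵀ*M₁).trace = sqrtTr A B := by rw [← hsdef]; linarith
        have hpsd : (Gᵀ*M₁).PosSemidef := (trace_le_sqrtTr hG hM₁).2 htreq
        exact ⟨M₁, hM₁, hpsd, by rw [← hH, hHK]⟩
    · rintro ⟨M, hMB, hMpsd, hCeq⟩
      intro D hD
      rw [hCeq]
      have h1 := form_val M hMB hMpsd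
      have h2 := lower D hD
      linarith
  · refine ⟨((1-t) • G + t • M₀) * ((1-t) • G + t • M₀)ᵀ, psd_mul_transpose _, ?_⟩
    intro D hD
    have h1 := form_val M₀ hM₀B hM₀psd
    have h2 := lower D hD
    linarith
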